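/- arXiv:2301.13501 — 3 statements merged into one kernel-verified Lean document; each statement's English description precedes it below -/
import Mathlib

section
/- Fix G ∈ ℝ^{d×K}. Suppose (p, α) ∈ ℝ₊^K × ℝ₊^K satisfies GᵀG α = p/α. Then there exist an open set U ⊆ ℝ^K containing p and a continuously differentiable function α̂ : U → ℝ^K such that α̂(p) = α, GᵀG α̂(q) = q / α̂(q) for all q ∈ U, and the Jacobian satisfies ∂α̂/∂p (p) = (GᵀG + Λ₀)⁻¹ Λ₁, where Λ₀, Λ₁ are diagonal with (Λ₀)_{ii} = p_i/α_i² and (Λ₁)_{ii} = 1/α_i. -/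
open Matrix

/-- implicit function for the bargaining solution: if positive
`(p, α)` satisfies `GᵀG α = p/α`, there is an open set `U ∋ p` and a `C¹`
function `α̂ : U → ℝ^K` with `α̂(p) = α`, solving `GᵀG α̂(q) = q/α̂(q)` on `U`,
whose Jacobian at `p` is `(GᵀG + Λ₀)⁻¹ Λ₁`. -/
theorem stmt_4 (d K : ℕ) (G : Matrix (Fin d) (Fin K) ℝ)
    (p α : Fin K → ℝ) (hp : ∀ i, 0 < p i) (hα : ∀ i, 0 < α i)
    (heq : (Gᵀ * G).mulVec α = fun i => p i / α i) :
    ∃ (U : Set (Fin K → ℝ)) (αhat : (Fin K → ℝ) → (Fin K → ℝ)),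
      IsOpen U ∧ p ∈ U ∧
      ContDiffOn ℝ 1 αhat U ∧
      αhat p = α ∧
      (∀ q ∈ U, (Gᵀ * G).mulVec (αhat q) = fun i => q i / αhat q i) ∧
      HasFDerivAt (𝕜 := ℝ) αhat
        (LinearMap.toContinuousLinearMap
          (Matrix.toLin'
            ((Gᵀ * G + Matrix.diagonal (fun i => p i / (α i) ^ 2))⁻¹ *
              Matrix.diagonal (fun i => 1 / α i)))) p := by
  classical
  set A : Matrix (Fin K) (Fin K) ℝ := Gᵀ * G with hAdef
  set M : Matrix (Fin K) (Fin K) ℝ := A + Matrix.diagonal (fun i => p i / (α i) ^ 2) with hMdef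
  set N : Matrix (Fin K) (Fin K) ℝ := Matrix.diagonal α * M with hNdef
  have hApsd : A.PosSemidef := by
    have h := Matrix.posSemidef_conjTranspose_mul_self G
    have : Gᴴ = Gᵀ := by ext i j; simp
    rwa [this] at h
  have hMpd : M.PosDef :=
    Matrix.PosDef.posSemidef_add hApsd (Matrix.PosDef.diagonal fun i => div_pos (hp i) (pow_pos (hα i) 2))
  have hMdet : IsUnit M.det := (Matrix.isUnit_iff_isUnit_det M).mp hMpd.isUnit
  have hNunit : IsUnit N := by
    refine IsUnit.mul ?_ hMpd.isUnit
    rw [Matrix.isUnit_iff_isUnit_det, Matrix.det_diagonal]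
    exact isUnit_iff_ne_zero.mpr (Finset.prod_ne_zero_iff.mpr fun i _ => (hα i).ne')
  have hNinv : Invertible N := hNunit.invertible
  let f' : (Fin K → ℝ) ≃L[ℝ] (Fin K → ℝ) :=
    (N.toLinearEquiv' hNinv).toContinuousLinearEquiv
  have hf'app : ∀ v, f' v = N.mulVec v := fun v => rfl
  -- the forward map
  set Φ : (Fin K → ℝ) → (Fin K → ℝ) := fun a => fun i => a i * A.mulVec a i with hΦdef
  have hΦα : Φ α = p := by
    funext i
    have : A.mulVec α i = p i / α i := congrFun heq i
    rw [hΦdef]; dsimp only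
    rw [this, mul_div_cancel₀ _ (hα i).ne']
  -- smoothness of Φ
  have hmv : ContDiff ℝ 1 (fun a : Fin K → ℝ => A.mulVec a) :=
    (LinearMap.toContinuousLinearMap A.mulVecLin).contDiff
  have hΦsmooth : ContDiff ℝ 1 Φ :=
    contDiff_pi.mpr fun i =>
      ((contDiff_pi.mp contDiff_id i).mul (contDiff_pi.mp hmv i))
  -- the key linear algebra identity for the derivative
  have key : ∀ v i, N.mulVec v i = α i * A.mulVec v i + A.mulVec α i * v i := by
    intro v i
    have hAα : A.mulVec α i = p i / α i := congrFun heq i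
    rw [hNdef, ← Matrix.mulVec_mulVec, Matrix.mulVec_diagonal, hMdef, Matrix.add_mulVec]
    simp only [Pi.add_apply, Matrix.mulVec_diagonal]
    rw [hAα]
    have := (hα i).ne'
    field_simp
  -- derivative of Φ at α
  have hΦ' : HasFDerivAt Φ (f' : (Fin K → ℝ) →L[ℝ] (Fin K → ℝ)) α := by
    apply hasFDerivAt_pi''
    intro i
    have h1 : HasFDerivAt (fun a : Fin K → ℝ => a i)
        (ContinuousLinearMap.proj (R := ℝ) (φ := fun _ : Fin K => ℝ) i) α :=
      hasFDerivAt_apply i α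
    have h2 : HasFDerivAt (fun a : Fin K → ℝ => A.mulVec a i)
        ((ContinuousLinearMap.proj i).comp
          (LinearMap.toContinuousLinearMap A.mulVecLin)) α :=
      ((ContinuousLinearMap.proj i).comp
        (LinearMap.toContinuousLinearMap A.mulVecLin)).hasFDerivAt
    refine (h1.mul h2).congr_fderiv ?_
    refine ContinuousLinearMap.ext fun v => ?_
    simp only [ContinuousLinearMap.coe_comp', Function.comp_apply,
      ContinuousLinearMap.proj_apply, ContinuousLinearMap.add_apply,
      ContinuousLinearMap.coe_smul', Pi.smul_apply,
      LinearMap.coe_toContinuousLinearMap', Matrix.mulVecLin_apply, smul_eq_mul]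
    have hv : (f' : (Fin K → ℝ) →L[ℝ] (Fin K → ℝ)) v = N.mulVec v := rfl
    rw [hv, key v i]
  -- local inverse
  have hΦat : ContDiffAt ℝ 1 Φ α := hΦsmooth.contDiffAt
  have hn : (1 : WithTop ℕ∞) ≠ 0 := one_ne_zero
  set αhat : (Fin K → ℝ) → (Fin K → ℝ) := hΦat.localInverse hΦ' hn with hαhatdef
  have hstrict : HasStrictFDerivAt Φ (f' : (Fin K → ℝ) →L[ℝ] (Fin K → ℝ)) α :=
    hΦat.hasStrictFDerivAt' hΦ' hn
  have hαhatp : αhat p = α := by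
    rw [← hΦα]; exact hΦat.localInverse_apply_image hΦ' hn
  have hαcd : ContDiffAt ℝ 1 αhat p := by
    rw [← hΦα] at *; exact hΦat.to_localInverse hΦ' hn
  -- right inverse eventually
  have hright : ∀ᶠ q in nhds p, Φ (αhat q) = q := by
    have := hstrict.eventually_right_inverse
    rw [hΦα] at this
    exact this
  -- positivity eventually
  have hposS : IsOpen {v : Fin K → ℝ | ∀ i, 0 < v i} := by
    have : {v : Fin K → ℝ | ∀ i, 0 < v i} = Set.univ.pi fun _ => Set.Ioi 0 := by
      ext v; simp [Set.mem_pi]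
    rw [this]
    exact isOpen_set_pi Set.finite_univ fun i _ => isOpen_Ioi
  have hpos : ∀ᶠ q in nhds p, ∀ i, 0 < αhat q i := by
    have hmem : {v : Fin K → ℝ | ∀ i, 0 < v i} ∈ nhds (αhat p) := by
      rw [hαhatp]; exact hposS.mem_nhds (fun i => hα i)
    exact hαcd.continuousAt.preimage_mem_nhds hmem
  -- contDiffOn neighborhood
  obtain ⟨u, hu, hcd⟩ := hαcd.contDiffOn le_rfl (by simp)
  have hs : u ∩ ({q | Φ (αhat q) = q} ∩ {q | ∀ i, 0 < αhat q i}) ∈ nhds p :=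
    Filter.inter_mem hu (Filter.inter_mem hright hpos)
  refine ⟨interior (u ∩ ({q | Φ (αhat q) = q} ∩ {q | ∀ i, 0 < αhat q i})), αhat,
    isOpen_interior, mem_interior_iff_mem_nhds.mpr hs, ?_, hαhatp, ?_, ?_⟩
  · exact hcd.mono (interior_subset.trans Set.inter_subset_left)
  · intro q hq
    have hq' := interior_subset hq
    have hΦq : Φ (αhat q) = q := hq'.2.1
    have hposq : ∀ i, 0 < αhat q i := hq'.2.2
    funext i
    have : αhat q i * A.mulVec (αhat q) i = q i := by
      rw [← congrFun hΦq i]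
    rw [eq_div_iff (hposq i).ne']
    rw [← this]; ring
  · -- derivative of the inverse
    have hd : HasFDerivAt αhat (f'.symm : (Fin K → ℝ) →L[ℝ] (Fin K → ℝ)) p := by
      rw [← hΦα]
      exact hstrict.to_localInverse.hasFDerivAt
    have hCLM : (LinearMap.toContinuousLinearMap
          (Matrix.toLin' (M⁻¹ * Matrix.diagonal (fun i => 1 / α i))))
        = (f'.symm : (Fin K → ℝ) →L[ℝ] (Fin K → ℝ)) := by
      have hleft : ∀ v, Matrix.toLin' (M⁻¹ * Matrix.diagonal (fun i => 1 / α i)) (f' v) = v := by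
        intro v
        rw [hf'app, ← Matrix.toLin'_apply N, ← LinearMap.comp_apply, ← Matrix.toLin'_mul]
        have : M⁻¹ * Matrix.diagonal (fun i => 1 / α i) * N = 1 := by
          rw [hNdef, Matrix.mul_assoc M⁻¹, ← Matrix.mul_assoc _ (Matrix.diagonal α),
            Matrix.diagonal_mul_diagonal]
          have : (fun i => 1 / α i * α i) = fun _ => (1 : ℝ) := by
            funext i; exact one_div_mul_cancel (hα i).ne'
          rw [this, Matrix.diagonal_one, Matrix.one_mul, Matrix.nonsing_inv_mul M hMdet]
        rw [this, Matrix.toLin'_one, LinearMap.id_apply]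
      refine ContinuousLinearMap.ext fun w => ?_
      have h2 := hleft (f'.symm w)
      rw [f'.apply_symm_apply] at h2
      simpa using h2
    rw [hCLM]
    exact hd
end

section
/- Let ℓ_1, ..., ℓ_K : ℝ^d → ℝ each be L-smooth. Let θ ∈ ℝ^d, let g_i = ∇ℓ_i(θ), let G be the matrix with columns g_i, let p ∈ ℝ₊^K with ∑ p_i = 1, let α ∈ ℝ₊^K satisfy GᵀG α = p/α, and set Δθ = Gα and θ' = θ − μΔθ for μ > 0. Then for each i: ℓ_i(θ') ≤ ℓ_i(θ) − μ p_i/α_i + μ²L/2. -/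
open scoped RealInnerProductSpace

lemma descent_lemma {E : Type*} [NormedAddCommGroup E] [InnerProductSpace ℝ E]
    [CompleteSpace E]
    (f : E → ℝ) (g : E → E) (L : ℝ) (hL : 0 ≤ L)
    (hgrad : ∀ x, HasGradientAt f (g x) x)
    (hlip : ∀ x y, ‖g x - g y‖ ≤ L * ‖x - y‖)
    (x v : E) :
    f (x + v) ≤ f x + ⟪g x, v⟫ + L / 2 * ‖v‖ ^ 2 := by
  have hgcont : Continuous g := by
    refine (LipschitzWith.of_dist_le_mul (K := L.toNNReal) fun a b => ?_).continuous
    simpa [dist_eq_norm, Real.coe_toNNReal L hL] using hlip a b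
  set c : ℝ → E := fun t => x + t • v with hc
  have hcc : Continuous c := by continuity
  have hder : ∀ t : ℝ, HasDerivAt (fun s => f (c s)) ⟪g (c t), v⟫ t := by
    intro t
    have h1 : HasDerivAt c v t := by
      have h0 := ((hasDerivAt_id t).smul_const v).const_add x
      rw [one_smul] at h0
      exact h0
    have h2 := ((hgrad (c t)).hasFDerivAt).comp_hasDerivAt t h1
    have h3 := h2
    simp at h3
    exact h3
  have hcont : Continuous fun t : ℝ => ⟪g (c t), v⟫ :=
    continuous_inner.comp ((hgcont.comp hcc).prodMk continuous_const)
  have hint : ∫ t in (0:ℝ)..1, ⟪g (c t), v⟫ = f (c 1) - f (c 0) :=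
    intervalIntegral.integral_eq_sub_of_hasDerivAt (fun t _ => hder t)
      (hcont.intervalIntegrable 0 1)
  have hbound : ∀ t ∈ Set.Icc (0:ℝ) 1, ⟪g (c t), v⟫ ≤ ⟪g x, v⟫ + L * t * ‖v‖ ^ 2 := by
    intro t ht
    have h1 : ⟪g (c t) - g x, v⟫ ≤ ‖g (c t) - g x‖ * ‖v‖ := real_inner_le_norm _ _
    have h2 : ‖g (c t) - g x‖ ≤ L * (t * ‖v‖) := by
      have := hlip (c t) x
      simpa [hc, norm_smul, abs_of_nonneg ht.1, mul_assoc] using this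
    have h3 : ⟪g (c t) - g x, v⟫ ≤ L * t * ‖v‖ ^ 2 := by
      calc ⟪g (c t) - g x, v⟫ ≤ ‖g (c t) - g x‖ * ‖v‖ := h1
        _ ≤ L * (t * ‖v‖) * ‖v‖ := mul_le_mul_of_nonneg_right h2 (norm_nonneg v)
        _ = L * t * ‖v‖ ^ 2 := by ring
    have h4 : ⟪g (c t) - g x, v⟫ = ⟪g (c t), v⟫ - ⟪g x, v⟫ :=
      inner_sub_left _ _ _
    linarith [h4 ▸ h3]
  have hle : ∫ t in (0:ℝ)..1, ⟪g (c t), v⟫ ≤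
      ∫ t in (0:ℝ)..1, (⟪g x, v⟫ + L * t * ‖v‖ ^ 2) := by
    apply intervalIntegral.integral_mono_on (by norm_num)
      (hcont.intervalIntegrable 0 1)
      ((by continuity : Continuous fun t : ℝ => ⟪g x, v⟫ + L * t * ‖v‖ ^ 2).intervalIntegrable 0 1)
    exact hbound
  have hval : ∫ t in (0:ℝ)..1, (⟪g x, v⟫ + L * t * ‖v‖ ^ 2) =
      ⟪g x, v⟫ + L / 2 * ‖v‖ ^ 2 := by
    rw [intervalIntegral.integral_add (intervalIntegrable_const) ((by continuity : Continuous fun t : ℝ => L * t * ‖v‖ ^ 2).intervalIntegrable 0 1)]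
    have : ∫ t in (0:ℝ)..1, L * t * ‖v‖ ^ 2 = L / 2 * ‖v‖ ^ 2 := by
      have : (fun t : ℝ => L * t * ‖v‖ ^ 2) = fun t : ℝ => (L * ‖v‖ ^ 2) * t := by
        funext t; ring
      rw [this, intervalIntegral.integral_const_mul, integral_id]
      norm_num; ring
    rw [this]; simp
  have hc0 : c 0 = x := by simp [hc]
  have hc1 : c 1 = x + v := by simp [hc]
  rw [hval] at hle
  rw [hint, hc0, hc1] at hle
  linarith

/-- per-task descent: with `L`-smooth losses `ℓ i`, gradients
`g i = ∇ℓ_i(θ)`, a positive probability vector `p`, a positive `α` with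
`GᵀG α = p/α` (i.e. `⟪g i, Gα⟫ = p_i/α_i`), `Δθ = Gα = ∑ α_i g_i` and
`θ' = θ − μ Δθ` with `μ > 0`, we have
`ℓ_i(θ') ≤ ℓ_i(θ) − μ p_i/α_i + μ²L/2` for each `i`. -/
theorem stmt_6 (d K : ℕ) (ℓ : Fin K → EuclideanSpace ℝ (Fin d) → ℝ)
    (g : Fin K → EuclideanSpace ℝ (Fin d) → EuclideanSpace ℝ (Fin d)) (L : ℝ)
    (hgrad : ∀ i x, HasGradientAt (ℓ i) (g i x) x)
    (hlip : ∀ i x y, ‖g i x - g i y‖ ≤ L * ‖x - y‖)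
    (θ : EuclideanSpace ℝ (Fin d))
    (p α : Fin K → ℝ)
    (hp : ∀ i, 0 < p i) (hpsum : ∑ i, p i = 1)
    (hα : ∀ i, 0 < α i)
    (heq : ∀ i, ⟪g i θ, ∑ j, α j • g j θ⟫ = p i / α i)
    (μ : ℝ) (hμ : 0 < μ) :
    ∀ i, ℓ i (θ - μ • ∑ j, α j • g j θ) ≤
      ℓ i θ - μ * (p i / α i) + μ ^ 2 * L / 2 := by
  intro i
  rcases Nat.eq_zero_or_pos d with hd | hd
  · exfalso
    subst hd
    have hz : g i θ = 0 := Subsingleton.elim _ _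
    have : (0:ℝ) = p i / α i := by
      simpa [hz] using heq i
    exact absurd this.symm (ne_of_gt (div_pos (hp i) (hα i)))
  · have hL : 0 ≤ L := by
      have hne : (EuclideanSpace.single (⟨0, hd⟩ : Fin d) (1:ℝ)) ≠ 0 := by
        intro h
        have := congrArg (fun f => f ⟨0, hd⟩) h
        simp [EuclideanSpace.single] at this
      have h1 := hlip i (EuclideanSpace.single (⟨0, hd⟩ : Fin d) (1:ℝ)) 0
      have h2 : ‖(EuclideanSpace.single (⟨0, hd⟩ : Fin d) (1:ℝ))‖ = 1 := by
        simp [EuclideanSpace.norm_single]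
      rw [sub_zero, h2, mul_one] at h1
      exact le_trans (norm_nonneg _) h1
    set Δ : EuclideanSpace ℝ (Fin d) := ∑ j, α j • g j θ with hΔdef
    have hΔ : ⟪Δ, Δ⟫ = 1 := by
      calc ⟪Δ, Δ⟫ = ∑ j, ⟪α j • g j θ, Δ⟫ := by rw [hΔdef, sum_inner]
        _ = ∑ j, α j * (p j / α j) := by
            refine Finset.sum_congr rfl fun j _ => ?_
            rw [real_inner_smul_left, heq j]
        _ = ∑ j, p j := by
            refine Finset.sum_congr rfl fun j _ => ?_
            rw [mul_comm, div_mul_cancel₀ _ (ne_of_gt (hα j))]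
        _ = 1 := hpsum
    have key := descent_lemma (ℓ i) (g i) L hL (hgrad i) (hlip i) θ (-(μ • Δ))
    have e1 : θ + -(μ • Δ) = θ - μ • Δ := by abel
    have e2 : ⟪g i θ, -(μ • Δ)⟫ = -(μ * (p i / α i)) := by
      rw [inner_neg_right, real_inner_smul_right, heq i]
    have e3 : ‖-(μ • Δ)‖ ^ 2 = μ ^ 2 := by
      rw [norm_neg, ← real_inner_self_eq_norm_sq, real_inner_smul_left,
        real_inner_smul_right, hΔ]
      ring
    rw [e1, e2, e3] at key
    linarith
end

section
/- Under the setup of the per-task descent inequality (ℓ_i L-smooth, GᵀGα = p/α with p_i > 0 summing to 1, Δθ = Gα, θ' = θ − μΔθ), choose the step size μ = (1/K) ∑_{i=1}^K p_i/(L α_i). Then the average loss L̄(θ) = (1/K) ∑_i ℓ_i(θ) satisfies L̄(θ') ≤ L̄(θ) − L μ²/2. -/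
open scoped RealInnerProductSpace

lemma descent_aux {E : Type*} [NormedAddCommGroup E] [InnerProductSpace ℝ E] [CompleteSpace E]
    (f : E → ℝ) (g : E → E) (L : ℝ) (hL : 0 ≤ L)
    (hg : ∀ x, HasGradientAt f (g x) x)
    (hlip : ∀ x y, ‖g x - g y‖ ≤ L * ‖x - y‖) (x y : E) :
    f y ≤ f x + ⟪g x, y - x⟫ + L / 2 * ‖y - x‖ ^ 2 := by
  set v := y - x with hv
  have hgc : Continuous g := by
    have : LipschitzWith (Real.toNNReal L) g := by
      apply LipschitzWith.of_dist_le_mul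
      intro a b
      simpa [dist_eq_norm, Real.coe_toNNReal _ hL] using hlip a b
    exact this.continuous
  have hder : ∀ t : ℝ, HasDerivAt (fun t : ℝ => f (x + t • v) - t * ⟪g x, v⟫)
      (⟪g (x + t • v), v⟫ - ⟪g x, v⟫) t := by
    intro t
    have h1 : HasDerivAt (fun t : ℝ => x + t • v) v t := by
      simpa using ((hasDerivAt_id t).smul_const v).const_add x
    have h2 := ((hg (x + t • v)).hasFDerivAt.comp_hasDerivAt t h1)
    have h3 : HasDerivAt (fun t : ℝ => f (x + t • v)) ⟪g (x + t • v), v⟫ t := by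
      exact h2
    exact h3.sub (hasDerivAt_mul_const (x := t) ⟪g x, v⟫)
  have hcont : Continuous fun t : ℝ => ⟪g (x + t • v), v⟫ - ⟪g x, v⟫ := by
    apply Continuous.sub _ continuous_const
    have : Continuous fun t : ℝ => g (x + t • v) :=
      hgc.comp (continuous_const.add (continuous_id.smul continuous_const))
    exact this.inner continuous_const
  have hftc := intervalIntegral.integral_eq_sub_of_hasDerivAt
    (fun t _ => hder t) (hcont.intervalIntegrable 0 1)
  have hbound : ∫ t in (0:ℝ)..1, (⟪g (x + t • v), v⟫ - ⟪g x, v⟫) ≤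
      ∫ t in (0:ℝ)..1, L * ‖v‖ ^ 2 * t := by
    apply intervalIntegral.integral_mono_on zero_le_one
      (hcont.intervalIntegrable 0 1)
      ((continuous_const.mul continuous_id).intervalIntegrable 0 1)
    intro t ht
    have h1 : ⟪g (x + t • v), v⟫ - ⟪g x, v⟫ = ⟪g (x + t • v) - g x, v⟫ := by
      rw [inner_sub_left]
    rw [h1]
    calc ⟪g (x + t • v) - g x, v⟫ ≤ ‖g (x + t • v) - g x‖ * ‖v‖ := real_inner_le_norm _ _
      _ ≤ (L * ‖x + t • v - x‖) * ‖v‖ := by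
          apply mul_le_mul_of_nonneg_right (hlip _ _) (norm_nonneg _)
      _ = L * ‖v‖ ^ 2 * t := by
          have : x + t • v - x = t • v := by abel
          rw [this, norm_smul, Real.norm_eq_abs, abs_of_nonneg ht.1]
          ring
  have hval : ∫ t in (0:ℝ)..1, L * ‖v‖ ^ 2 * t = L / 2 * ‖v‖ ^ 2 := by
    rw [intervalIntegral.integral_const_mul, integral_id]
    ring
  have key : f y - f x - ⟪g x, v⟫ ≤ L / 2 * ‖v‖ ^ 2 := by
    have : f (x + (1:ℝ) • v) - (1:ℝ) * ⟪g x, v⟫ - (f (x + (0:ℝ) • v) - (0:ℝ) * ⟪g x, v⟫)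
        = ∫ t in (0:ℝ)..1, (⟪g (x + t • v), v⟫ - ⟪g x, v⟫) := hftc.symm
    have hy : x + (1:ℝ) • v = y := by rw [hv]; simp
    rw [hy] at this
    simp only [zero_smul, add_zero, zero_mul, sub_zero, one_mul] at this
    linarith [hbound, hval ▸ hbound]
  linarith
/-- average-loss descent: under the per-task descent setup, with
step size `μ = (1/K) ∑ p_i/(L α_i)`, the average loss `L̄ = (1/K) ∑ ℓ_i`
satisfies `L̄(θ') ≤ L̄(θ) − L μ²/2`. -/
theorem stmt_7 (d K : ℕ) (ℓ : Fin K → EuclideanSpace ℝ (Fin d) → ℝ)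
    (g : Fin K → EuclideanSpace ℝ (Fin d) → EuclideanSpace ℝ (Fin d)) (L : ℝ)
    (hL : 0 < L)
    (hgrad : ∀ i x, HasGradientAt (ℓ i) (g i x) x)
    (hlip : ∀ i x y, ‖g i x - g i y‖ ≤ L * ‖x - y‖)
    (θ : EuclideanSpace ℝ (Fin d))
    (p α : Fin K → ℝ)
    (hp : ∀ i, 0 < p i) (hpsum : ∑ i, p i = 1)
    (hα : ∀ i, 0 < α i)
    (heq : ∀ i, ⟪g i θ, ∑ j, α j • g j θ⟫ = p i / α i)
    (μ : ℝ) (hμ : μ = (1 / (K : ℝ)) * ∑ i, p i / (L * α i)) :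
    (1 / (K : ℝ)) * ∑ i, ℓ i (θ - μ • ∑ j, α j • g j θ) ≤
      (1 / (K : ℝ)) * ∑ i, ℓ i θ - L * μ ^ 2 / 2 := by
  rcases Nat.eq_zero_or_pos K with hK | hK
  · subst hK; simp at hpsum
  have hKpos : (0:ℝ) < K := Nat.cast_pos.mpr hK
  set Δ : EuclideanSpace ℝ (Fin d) := ∑ j, α j • g j θ with hΔdef
  have hΔnorm : ‖Δ‖ ^ 2 = 1 := by
    have h1 : ⟪Δ, Δ⟫ = 1 := by
      rw [hΔdef, sum_inner]
      have : ∀ j, ⟪α j • g j θ, Δ⟫ = p j := by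
        intro j
        rw [real_inner_smul_left, heq j, mul_div_assoc', mul_comm,
          mul_div_assoc, div_self (hα j).ne', mul_one]
      simp only [hΔdef] at this ⊢
      rw [Finset.sum_congr rfl (fun j _ => this j), hpsum]
    rw [← real_inner_self_eq_norm_sq, h1]
  -- per-task descent
  have hper : ∀ i, ℓ i (θ - μ • Δ) ≤ ℓ i θ - μ * (p i / α i) + L / 2 * μ ^ 2 := by
    intro i
    have := descent_aux (ℓ i) (g i) L hL.le (hgrad i) (hlip i) θ (θ - μ • Δ)
    have hsub : θ - μ • Δ - θ = -(μ • Δ) := by abel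
    rw [hsub] at this
    have hin : ⟪g i θ, -(μ • Δ)⟫ = -(μ * (p i / α i)) := by
      rw [inner_neg_right, real_inner_smul_right, heq i]
    have hnn : ‖-(μ • Δ)‖ ^ 2 = μ ^ 2 := by
      rw [norm_neg, norm_smul, mul_pow, Real.norm_eq_abs, sq_abs, hΔnorm, mul_one]
    rw [hin, hnn] at this
    linarith
  have hsum : ∑ i, ℓ i (θ - μ • Δ) ≤
      ∑ i, ℓ i θ - μ * ∑ i, (p i / α i) + K * (L / 2 * μ ^ 2) := by
    calc ∑ i, ℓ i (θ - μ • Δ) ≤ ∑ i, (ℓ i θ - μ * (p i / α i) + L / 2 * μ ^ 2) :=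
          Finset.sum_le_sum fun i _ => hper i
      _ = ∑ i, ℓ i θ - μ * ∑ i, (p i / α i) + K * (L / 2 * μ ^ 2) := by
          rw [Finset.sum_add_distrib, Finset.sum_sub_distrib, Finset.mul_sum,
            Finset.sum_const, Finset.card_univ, Fintype.card_fin, nsmul_eq_mul]
  have hS : ∑ i, (p i / α i) = K * L * μ := by
    have h1 : ∑ i, p i / (L * α i) = (1/L) * ∑ i, (p i / α i) := by
      rw [Finset.mul_sum]
      congr 1; ext i; field_simp
    rw [hμ, h1]
    field_simp
  have := mul_le_mul_of_nonneg_left hsum (by positivity : (0:ℝ) ≤ 1 / K)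
  calc (1 / (K : ℝ)) * ∑ i, ℓ i (θ - μ • Δ)
      ≤ (1 / (K : ℝ)) * (∑ i, ℓ i θ - μ * ∑ i, (p i / α i) + K * (L / 2 * μ ^ 2)) := this
    _ = (1 / (K : ℝ)) * ∑ i, ℓ i θ - L * μ ^ 2 + L / 2 * μ ^ 2 := by
        rw [hS]; field_simp
    _ = (1 / (K : ℝ)) * ∑ i, ℓ i θ - L * μ ^ 2 / 2 := by ring
end
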